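/- If α(F,x) < 0.03 and ‖x − y‖ < 1/(20 γ(F,x)), then x and y are both approximate solutions for F with the same associated solution x⋆, and ‖x − x⋆‖ ≤ 1/(20 γ(F,x)). -/

import Mathlib

open ContDiff Nat Metric Set
open scoped ENNReal NNReal

open Classical in
/-- The Newton operator. -/
noncomputable def newtonOp {n : ℕ} (F : EuclideanSpace ℂ (Fin n) → EuclideanSpace ℂ (Fin n))
    (y : EuclideanSpace ℂ (Fin n)) : EuclideanSpace ℂ (Fin n) :=
  if IsUnit (fderiv ℂ F y) then y - (Ring.inverse (fderiv ℂ F y)) (F y) else y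

/-- Smale's `β(F,x) = ‖F'(x)⁻¹ F(x)‖`. -/
noncomputable def smaleBeta {n : ℕ} (F : EuclideanSpace ℂ (Fin n) → EuclideanSpace ℂ (Fin n))
    (x : EuclideanSpace ℂ (Fin n)) : ℝ :=
  ‖(Ring.inverse (fderiv ℂ F x)) (F x)‖

/-- Smale's `γ(F,x) = sup_{k ≥ 2} ‖F'(x)⁻¹ F^{(k)}(x) / k!‖^{1/(k-1)}`. -/
noncomputable def smaleGamma {n : ℕ} (F : EuclideanSpace ℂ (Fin n) → EuclideanSpace ℂ (Fin n))
    (x : EuclideanSpace ℂ (Fin n)) : ℝ :=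
  ⨆ k : {k : ℕ // 2 ≤ k},
    (‖(Ring.inverse (fderiv ℂ F x)).compContinuousMultilinearMap
        (iteratedFDeriv ℂ (k : ℕ) F x)‖ / (Nat.factorial k)) ^ ((1 : ℝ) / ((k : ℕ) - 1))

/-- Smale's `α(F,x) = β(F,x)·γ(F,x)`. -/
noncomputable def smaleAlpha {n : ℕ} (F : EuclideanSpace ℂ (Fin n) → EuclideanSpace ℂ (Fin n))
    (x : EuclideanSpace ℂ (Fin n)) : ℝ :=
  smaleBeta F x * smaleGamma F x


section aux
variable {E : Type*} [NormedAddCommGroup E] [NormedSpace ℂ E] [CompleteSpace E]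

theorem my_iteratedFDeriv_comp_const_add {F' : Type*} [NormedAddCommGroup F'] [NormedSpace ℂ F']
    (f : E → F') (hf : ContDiff ℂ ω f) (a : E) (k : ℕ) :
    ∀ v : E, iteratedFDeriv ℂ k (fun z => f (a + z)) v = iteratedFDeriv ℂ k f (a + v) := by
  induction k with
  | zero =>
    intro v
    exact ContinuousMultilinearMap.ext fun m => by simp [iteratedFDeriv_zero_apply]
  | succ k ih =>
    intro v
    rw [iteratedFDeriv_succ_eq_comp_left, iteratedFDeriv_succ_eq_comp_left]
    simp only [Function.comp_apply]
    congr 1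
    have hdiff : Differentiable ℂ (iteratedFDeriv ℂ k f) :=
      hf.differentiable_iteratedFDeriv (by simp)
    have h1 : (iteratedFDeriv ℂ k (fun z => f (a + z))) = fun z => iteratedFDeriv ℂ k f (a + z) :=
      funext ih
    rw [h1]
    have h2 : HasFDerivAt (fun z : E => iteratedFDeriv ℂ k f (a + z))
        (fderiv ℂ (iteratedFDeriv ℂ k f) (a + v)) v := by
      have := ((hdiff (a + v)).hasFDerivAt).comp v ((hasFDerivAt_id v).const_add a)
      exact this.congr_fderiv (by simp)
    rw [h2.fderiv]

theorem my_hasSum_taylor_diag {F' : Type*} [NormedAddCommGroup F'] [NormedSpace ℂ F']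
    [CompleteSpace F'] (f : E → F') (hf : ContDiff ℂ ω f) (x w : E) :
    HasSum (fun k : ℕ => (k ! : ℂ)⁻¹ • iteratedFDeriv ℂ k f x (fun _ => w)) (f (x + w)) := by
  set g : ℂ → F' := fun z => f (x + z • w) with hg_def
  have hg : Differentiable ℂ g :=
    (hf.differentiable (by simp)).comp ((differentiable_id.smul_const w).const_add x)
  have hgb := hg.hasFPowerSeriesOnBall 0 (R := 1) one_pos
  have hs := hgb.hasSum_iteratedFDeriv (y := (1 : ℂ)) (by simp)
  have hval : g (0 + 1) = f (x + w) := by simp [hg_def]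
  rw [hval] at hs
  convert hs using 2 with k
  have h1 : ContDiff ℂ ω (fun v : E => f (x + v)) := hf.comp (contDiff_const.add contDiff_id)
  have hcomp : (fun v : E => f (x + v)) ∘ (ContinuousLinearMap.toSpanSingleton ℂ w) = g := by
    funext z
    simp [hg_def, ContinuousLinearMap.toSpanSingleton_apply]
  have h2 := (ContinuousLinearMap.toSpanSingleton ℂ w).iteratedFDeriv_comp_right h1 (0 : ℂ)
      (i := k) le_top
  rw [hcomp] at h2
  rw [h2, ContinuousMultilinearMap.compContinuousLinearMap_apply]
  rw [my_iteratedFDeriv_comp_const_add f hf x]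
  simp [ContinuousLinearMap.toSpanSingleton_apply]

set_option maxHeartbeats 2000000 in
theorem smale_core (G : E → E) (hG : ContDiff ℂ ω G) (x : E) (c : ℝ) (hc : 0 < c)
    (hg1 : fderiv ℂ G x = ContinuousLinearMap.id ℂ E)
    (hb : ‖G x‖ ≤ 3 / (100 * c))
    (hcoef : ∀ k : ℕ, 2 ≤ k → ‖iteratedFDeriv ℂ k G x‖ ≤ k ! * c ^ (k - 1)) :
    ∃ xs : E, G xs = 0 ∧ ‖x - xs‖ ≤ 1 / (30 * c) ∧
      ∀ z : E, ‖z - xs‖ ≤ 1 / (12 * c) →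
        IsUnit (fderiv ℂ G z) ∧
        ‖z - Ring.inverse (fderiv ℂ G z) (G z) - xs‖ ≤ (115 * c / 26) * ‖z - xs‖ ^ 2 := by
  have hGdiff : Differentiable ℂ G := hG.differentiable (by simp)
  set P : FormalMultilinearSeries ℂ E E := fun k => (k ! : ℂ)⁻¹ • iteratedFDeriv ℂ k G x with hP_def
  have hPnorm : ∀ k : ℕ, ‖P k‖ = ‖iteratedFDeriv ℂ k G x‖ / k ! := by
    intro k
    rw [show P k = (k ! : ℂ)⁻¹ • iteratedFDeriv ℂ k G x from rfl,
      norm_smul ((k ! : ℂ)⁻¹) (iteratedFDeriv ℂ k G x), norm_inv,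
      Complex.norm_natCast, inv_mul_eq_div]
  have hP2 : ∀ k : ℕ, 2 ≤ k → ‖P k‖ ≤ c ^ (k - 1) := by
    intro k hk
    rw [hPnorm, div_le_iff₀ (by positivity)]
    calc ‖iteratedFDeriv ℂ k G x‖ ≤ k ! * c ^ (k-1) := hcoef k hk
      _ = c ^ (k-1) * k ! := by ring
  have hP1 : ‖P 1‖ ≤ 1 := by
    rw [hPnorm]
    simp only [Nat.factorial_one, Nat.cast_one, div_one]
    apply ContinuousMultilinearMap.opNorm_le_bound zero_le_one
    intro m
    rw [iteratedFDeriv_one_apply, hg1]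
    simp [Fin.prod_univ_one]
  have hP0 : ‖P 0‖ ≤ ‖G x‖ := by
    apply ContinuousMultilinearMap.opNorm_le_bound (norm_nonneg _)
    intro m
    simp [hP_def, iteratedFDeriv_zero_apply]
  have hPsum : ∀ w : E, HasSum (fun k => P k (fun _ => w)) (G (x + w)) := by
    intro w
    have := my_hasSum_taylor_diag G hG x w
    exact this
  have hrad : ENNReal.ofReal (1 / (5 * c)) ≤ P.radius := by
    have hrpos : (0:ℝ) < 1 / (5 * c) := by positivity
    set r : ℝ≥0 := Real.toNNReal (1 / (5 * c)) with hr_def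
    have hr : (r : ℝ) = 1 / (5 * c) := Real.coe_toNNReal _ hrpos.le
    have hC : ∀ n : ℕ, ‖P n‖ * (r : ℝ) ^ n ≤ 3 / (100 * c) + 1 / (5 * c) + 1 / c := by
      intro n
      have hc1 : (0:ℝ) < 1 / c := by positivity
      have h3 : (0:ℝ) < 3 / (100 * c) := by positivity
      match n with
      | 0 =>
        simp only [pow_zero, mul_one]
        have := hP0.trans hb
        linarith
      | 1 =>
        rw [pow_one, hr]
        have h4 : ‖P 1‖ * (1 / (5 * c)) ≤ 1 * (1 / (5 * c)) :=
          mul_le_mul_of_nonneg_right hP1 hrpos.le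
        linarith
      | (k + 2) =>
        have hb1 : ‖P (k + 2)‖ ≤ c ^ (k + 1) := hP2 (k + 2) (by omega)
        rw [hr]
        calc ‖P (k + 2)‖ * (1 / (5 * c)) ^ (k + 2)
            ≤ c ^ (k + 1) * (1 / (5 * c)) ^ (k + 2) :=
              mul_le_mul_of_nonneg_right hb1 (by positivity)
          _ ≤ c ^ (k + 1) * (1 / c) ^ (k + 2) := by
              apply mul_le_mul_of_nonneg_left _ (by positivity)
              exact pow_le_pow_left₀ (by positivity)
                (one_div_le_one_div_of_le hc (by linarith)) _
          _ = 1 / c := by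
              rw [pow_succ (1 / c) (k + 1), ← mul_assoc, ← mul_pow,
                mul_one_div_cancel hc.ne', one_pow, one_mul]
          _ ≤ _ := by linarith
    have hle := P.le_radius_of_bound _ hC
    have : ENNReal.ofReal (1 / (5 * c)) = (r : ℝ≥0∞) := rfl
    rw [this]
    exact hle
  have hPball : HasFPowerSeriesOnBall G P x (ENNReal.ofReal (1 / (5 * c))) :=
    ⟨hrad, ENNReal.ofReal_pos.2 (by positivity), fun {w} _ => hPsum w⟩
  have hQball := hPball.fderiv
  have hQ0 : ∀ v : Fin 0 → E, P.derivSeries 0 v = ContinuousLinearMap.id ℂ E := by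
    intro v
    rw [hQball.coeff_zero v, hg1]
  have hQn : ∀ m : ℕ, 1 ≤ m → ‖P.derivSeries m‖ ≤ (m + 1) * c ^ m := by
    intro m hm
    have hcs : ‖P.changeOriginSeries 1 m‖ ≤ (m + 1) * ‖P (1 + m)‖ := by
      have hnn := P.nnnorm_changeOriginSeries_le_tsum 1 m
      rw [tsum_fintype] at hnn
      simp only [Finset.sum_const, Finset.card_univ] at hnn
      have hcard : Fintype.card {s : Finset (Fin (1 + m)) // s.card = m} = m + 1 := by
        rw [Fintype.card_finset_len, Fintype.card_fin, add_comm 1 m,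
          Nat.choose_succ_self_right]
      rw [hcard] at hnn
      have h2 := (NNReal.coe_le_coe).2 hnn
      rw [nsmul_eq_mul] at h2
      exact_mod_cast h2
    have hcomp : ‖P.derivSeries m‖ ≤ ‖P.changeOriginSeries 1 m‖ := by
      apply le_trans (ContinuousLinearMap.norm_compContinuousMultilinearMap_le _ _)
      apply mul_le_of_le_one_left (norm_nonneg _)
      exact ContinuousLinearMap.opNorm_le_bound _ zero_le_one (by simp)
    have hPc : ‖P (1 + m)‖ ≤ c ^ m := by
      have := hP2 (1 + m) (by omega)
      simpa using this
    calc ‖P.derivSeries m‖ ≤ ‖P.changeOriginSeries 1 m‖ := hcomp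
      _ ≤ (m + 1) * ‖P (1 + m)‖ := hcs
      _ ≤ (m + 1) * c ^ m := by
          apply mul_le_mul_of_nonneg_left hPc (by positivity)
  have hQsum : ∀ w : E, ‖w‖ ≤ 7 / (60 * c) →
      HasSum (fun m => P.derivSeries m (fun _ => w)) (fderiv ℂ G (x + w)) := by
    intro w hw
    apply hQball.hasSum
    rw [EMetric.mem_ball, edist_zero_right, ← ofReal_norm]
    rw [ENNReal.ofReal_lt_ofReal_iff (by positivity)]
    calc ‖w‖ ≤ 7 / (60 * c) := hw
      _ < 1 / (5 * c) := by rw [div_lt_div_iff₀ (by positivity) (by positivity)]; nlinarith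
  have hDer : ∀ t : ℝ, 0 ≤ t → t ≤ 7 / 60 → ∀ w : E, c * ‖w‖ ≤ t →
      ‖fderiv ℂ G (x + w) - ContinuousLinearMap.id ℂ E‖ ≤ 2 * t / (1 - 2 * t) := by
    intro t ht ht' w hw
    have hwr : ‖w‖ ≤ 7 / (60 * c) := by
      rw [le_div_iff₀ (by positivity)]
      calc ‖w‖ * (60 * c) = 60 * (c * ‖w‖) := by ring
        _ ≤ 60 * t := by linarith
        _ ≤ 7 := by linarith
    have hsum := hQsum w hwr
    have h0 : P.derivSeries 0 (fun _ => w) = ContinuousLinearMap.id ℂ E := hQ0 _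
    have hshift : HasSum (fun m => P.derivSeries (m + 1) (fun _ => w))
        (fderiv ℂ G (x + w) - ContinuousLinearMap.id ℂ E) := by
      have h1 := (hasSum_nat_add_iff' (f := fun m => P.derivSeries m (fun _ => w)) 1).2 hsum
      simpa [h0] using h1
    have h2t : 2 * t < 1 := by linarith
    have hterm : ∀ m : ℕ, ‖P.derivSeries (m + 1) (fun _ => w)‖ ≤ (2 * t) ^ (m + 1) := by
      intro m
      have hle := ContinuousMultilinearMap.le_opNorm (P.derivSeries (m + 1)) (fun _ => w)
      simp only [Finset.prod_const, Finset.card_univ, Fintype.card_fin] at hle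
      calc ‖P.derivSeries (m + 1) (fun _ => w)‖ ≤ ‖P.derivSeries (m + 1)‖ * ‖w‖ ^ (m + 1) := hle
        _ ≤ (((m + 1 : ℕ)) + 1) * c ^ (m + 1) * ‖w‖ ^ (m + 1) :=
            mul_le_mul_of_nonneg_right (hQn (m + 1) (by omega)) (by positivity)
        _ = ((m + 2 : ℕ)) * (c * ‖w‖) ^ (m + 1) := by rw [mul_pow]; push_cast; ring
        _ ≤ 2 ^ (m + 1) * t ^ (m + 1) := by
            apply mul_le_mul _ (pow_le_pow_left₀ (by positivity) hw _) (by positivity)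
              (by positivity)
            have h2 : (m + 2 : ℕ) ≤ 2 ^ (m + 1) := Nat.succ_le_of_lt (Nat.lt_two_pow_self (n := m + 1))
            calc ((m + 2 : ℕ) : ℝ) ≤ ((2 ^ (m + 1) : ℕ) : ℝ) := Nat.cast_le.2 h2
              _ = 2 ^ (m + 1) := by push_cast; ring
        _ = (2 * t) ^ (m + 1) := (mul_pow 2 t (m + 1)).symm
    have hsummaj : Summable (fun m : ℕ => (2 * t) ^ (m + 1)) :=
      (summable_nat_add_iff 1).2 (summable_geometric_of_lt_one (by linarith) h2t)
    have hsn : Summable (fun m : ℕ => ‖P.derivSeries (m + 1) (fun _ => w)‖) :=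
      Summable.of_nonneg_of_le (fun m => norm_nonneg _) hterm hsummaj
    calc ‖fderiv ℂ G (x + w) - ContinuousLinearMap.id ℂ E‖
        = ‖∑' m, P.derivSeries (m + 1) (fun _ => w)‖ := by rw [hshift.tsum_eq]
      _ ≤ ∑' m, ‖P.derivSeries (m + 1) (fun _ => w)‖ := norm_tsum_le_tsum_norm hsn
      _ ≤ ∑' m, (2 * t) ^ (m + 1) := Summable.tsum_le_tsum hterm hsn hsummaj
      _ = 2 * t / (1 - 2 * t) := by
          have he : (fun m : ℕ => (2 * t) ^ (m + 1)) = fun m : ℕ => (2 * t) * (2 * t) ^ m := by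
            funext m; rw [pow_succ]; ring
          rw [he, tsum_mul_left, tsum_geometric_of_lt_one (by linarith) h2t, div_eq_mul_inv]
  have hUnit : ∀ w : E, ‖w‖ ≤ 7 / (60 * c) →
      IsUnit (fderiv ℂ G (x + w)) ∧ ‖Ring.inverse (fderiv ℂ G (x + w))‖ ≤ 23 / 16 := by
    intro w hw
    have hct : c * ‖w‖ ≤ 7 / 60 := by
      calc c * ‖w‖ ≤ c * (7 / (60 * c)) := mul_le_mul_of_nonneg_left hw hc.le
        _ = 7 / 60 := by field_simp
    have hd23 : ‖fderiv ℂ G (x + w) - ContinuousLinearMap.id ℂ E‖ ≤ 7 / 23 := by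
      calc ‖fderiv ℂ G (x + w) - ContinuousLinearMap.id ℂ E‖
          ≤ 2 * (7 / 60) / (1 - 2 * (7 / 60)) := hDer (7 / 60) (by norm_num) le_rfl w hct
        _ = 7 / 23 := by norm_num
    set S := fderiv ℂ G (x + w) with hS
    have hD : ‖(1 : E →L[ℂ] E) - S‖ ≤ 7 / 23 := by
      rw [ContinuousLinearMap.one_def, norm_sub_rev]; exact hd23
    have hDlt : ‖(1 : E →L[ℂ] E) - S‖ < 1 := lt_of_le_of_lt hD (by norm_num)
    have hU : IsUnit S := by
      have := isUnit_one_sub_of_norm_lt_one hDlt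
      simpa [sub_sub_cancel] using this
    refine ⟨hU, ?_⟩
    have hginv := geom_series_eq_inverse ((1 : E →L[ℂ] E) - S) hDlt
    rw [sub_sub_cancel] at hginv
    rw [← hginv]
    have htermb : ∀ n : ℕ, ‖((1 : E →L[ℂ] E) - S) ^ n‖ ≤ (7 / 23 : ℝ) ^ n := by
      intro n
      match n with
      | 0 => simpa [ContinuousLinearMap.one_def] using ContinuousLinearMap.norm_id_le
      | (k + 1) =>
        exact le_trans (norm_pow_le' _ k.succ_pos)
          (pow_le_pow_left₀ (norm_nonneg _) hD _)
    have hsummaj : Summable (fun n : ℕ => ((7 : ℝ) / 23) ^ n) :=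
      summable_geometric_of_lt_one (by norm_num) (by norm_num)
    have hsn : Summable (fun n : ℕ => ‖((1 : E →L[ℂ] E) - S) ^ n‖) :=
      Summable.of_nonneg_of_le (fun _ => norm_nonneg _) htermb hsummaj
    calc ‖∑' n, ((1 : E →L[ℂ] E) - S) ^ n‖ ≤ ∑' n, ‖((1 : E →L[ℂ] E) - S) ^ n‖ :=
          norm_tsum_le_tsum_norm hsn
      _ ≤ ∑' n, ((7 : ℝ) / 23) ^ n := Summable.tsum_le_tsum htermb hsn hsummaj
      _ = (1 - 7 / 23)⁻¹ := tsum_geometric_of_lt_one (by norm_num) (by norm_num)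
      _ ≤ 23 / 16 := by norm_num
  have hLip : ∀ w₁ w₂ : E, ‖w₁‖ ≤ 7 / (60 * c) → ‖w₂‖ ≤ 7 / (60 * c) →
      ‖fderiv ℂ G (x + w₁) - fderiv ℂ G (x + w₂)‖ ≤ (40 * c / 13) * ‖w₁ - w₂‖ := by
    have hnat : ∀ m : ℕ, (m + 2) * (m + 1) ≤ 2 * 3 ^ m := by
      intro m
      induction m with
      | zero => norm_num
      | succ k ih =>
        have h3 : 2 * 3 ^ (k + 1) = 3 * (2 * 3 ^ k) := by ring
        rw [h3]
        calc (k + 1 + 2) * (k + 1 + 1) ≤ 3 * ((k + 2) * (k + 1)) := by nlinarith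
          _ ≤ 3 * (2 * 3 ^ k) := by omega
    intro w₁ w₂ h1 h2
    have hs1 := hQsum w₁ h1
    have hs2 := hQsum w₂ h2
    have hsub := hs1.sub hs2
    have h00 : P.derivSeries 0 (fun _ => w₁) - P.derivSeries 0 (fun _ => w₂) = 0 := by
      rw [hQ0, hQ0, sub_self]
    have hshift : HasSum (fun m => P.derivSeries (m + 1) (fun _ => w₁) -
        P.derivSeries (m + 1) (fun _ => w₂))
        (fderiv ℂ G (x + w₁) - fderiv ℂ G (x + w₂)) := by
      have h1' := (hasSum_nat_add_iff'
        (f := fun m => P.derivSeries m (fun _ => w₁) - P.derivSeries m (fun _ => w₂)) 1).2 hsub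
      simpa [h00] using h1'
    have hmax : max ‖w₁‖ ‖w₂‖ ≤ 7 / (60 * c) := max_le h1 h2
    have hident : ∀ m : ℕ, c ^ (m + 1) * (7 / (60 * c)) ^ m = c * (7 / 60) ^ m := by
      intro m
      have e1 : (7 / (60 * c) : ℝ) = (7 / 60) * (1 / c) := by ring
      rw [e1, mul_pow, pow_succ]
      have e2 : c ^ m * (1 / c) ^ m = 1 := by
        rw [← mul_pow, mul_one_div_cancel hc.ne', one_pow]
      calc c ^ m * c * ((7 / 60) ^ m * (1 / c) ^ m)
          = (c ^ m * (1 / c) ^ m) * (c * (7 / 60) ^ m) := by ring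
        _ = c * (7 / 60) ^ m := by rw [e2, one_mul]
    have hterm : ∀ m : ℕ, ‖P.derivSeries (m + 1) (fun _ => w₁) -
        P.derivSeries (m + 1) (fun _ => w₂)‖ ≤ (2 * c * ‖w₁ - w₂‖) * (7 / 20) ^ m := by
      intro m
      have key := ContinuousMultilinearMap.norm_image_sub_le (P.derivSeries (m + 1))
        (fun _ => w₁) (fun _ => w₂)
      have hn1 : ‖(fun _ : Fin (m + 1) => w₁)‖ = ‖w₁‖ := pi_norm_const _
      have hn2 : ‖(fun _ : Fin (m + 1) => w₂)‖ = ‖w₂‖ := pi_norm_const _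
      have hnd : ‖(fun _ : Fin (m + 1) => w₁) - (fun _ : Fin (m + 1) => w₂)‖ = ‖w₁ - w₂‖ := by
        have : (fun _ : Fin (m + 1) => w₁) - (fun _ : Fin (m + 1) => w₂)
            = fun _ : Fin (m + 1) => w₁ - w₂ := rfl
        rw [this, pi_norm_const]
      rw [hn1, hn2, hnd, Fintype.card_fin] at key
      push_cast at key
      calc ‖P.derivSeries (m + 1) (fun _ => w₁) - P.derivSeries (m + 1) (fun _ => w₂)‖
          ≤ ‖P.derivSeries (m + 1)‖ * ((m : ℝ) + 1) * max ‖w₁‖ ‖w₂‖ ^ m * ‖w₁ - w₂‖ := key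
        _ ≤ (((m + 1 : ℕ) + 1) * c ^ (m + 1)) * ((m : ℝ) + 1) * (7 / (60 * c)) ^ m * ‖w₁ - w₂‖ := by
            apply mul_le_mul_of_nonneg_right _ (norm_nonneg _)
            apply mul_le_mul _ (pow_le_pow_left₀ (le_trans (norm_nonneg _) (le_max_left _ _))
              hmax m) (by positivity) (by positivity)
            exact mul_le_mul_of_nonneg_right (hQn (m + 1) (by omega)) (by positivity)
        _ = (((m + 2) * (m + 1) : ℕ) : ℝ) * (c ^ (m + 1) * (7 / (60 * c)) ^ m) * ‖w₁ - w₂‖ := by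
            push_cast; ring
        _ ≤ (2 * 3 ^ m : ℝ) * (c * (7 / 60) ^ m) * ‖w₁ - w₂‖ := by
            apply mul_le_mul_of_nonneg_right _ (norm_nonneg _)
            apply mul_le_mul _ (le_of_eq (hident m)) (by positivity) (by positivity)
            calc (((m + 2) * (m + 1) : ℕ) : ℝ) ≤ ((2 * 3 ^ m : ℕ) : ℝ) := Nat.cast_le.2 (hnat m)
              _ = 2 * 3 ^ m := by push_cast; ring
        _ = (2 * c * ‖w₁ - w₂‖) * (7 / 20) ^ m := by
            rw [show ((7 : ℝ) / 20) = 3 * (7 / 60) by norm_num, mul_pow]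
            ring
    have hsummaj : Summable (fun m : ℕ => (2 * c * ‖w₁ - w₂‖) * (7 / 20 : ℝ) ^ m) :=
      (summable_geometric_of_lt_one (by norm_num) (by norm_num)).mul_left _
    have hsn : Summable (fun m : ℕ => ‖P.derivSeries (m + 1) (fun _ => w₁) -
        P.derivSeries (m + 1) (fun _ => w₂)‖) :=
      Summable.of_nonneg_of_le (fun _ => norm_nonneg _) hterm hsummaj
    calc ‖fderiv ℂ G (x + w₁) - fderiv ℂ G (x + w₂)‖
        = ‖∑' m, (P.derivSeries (m + 1) (fun _ => w₁) -
            P.derivSeries (m + 1) (fun _ => w₂))‖ := by rw [hshift.tsum_eq]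
      _ ≤ ∑' m, ‖P.derivSeries (m + 1) (fun _ => w₁) -
            P.derivSeries (m + 1) (fun _ => w₂)‖ := norm_tsum_le_tsum_norm hsn
      _ ≤ ∑' m, (2 * c * ‖w₁ - w₂‖) * (7 / 20 : ℝ) ^ m := Summable.tsum_le_tsum hterm hsn hsummaj
      _ = (2 * c * ‖w₁ - w₂‖) * (1 - 7 / 20)⁻¹ := by
          rw [tsum_mul_left, tsum_geometric_of_lt_one (by norm_num) (by norm_num)]
      _ = (40 * c / 13) * ‖w₁ - w₂‖ := by norm_num; ring
  have hTay : ∀ z₁ z₂ : E, z₁ ∈ Metric.closedBall x (7 / (60 * c)) →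
      z₂ ∈ Metric.closedBall x (7 / (60 * c)) →
      ‖G z₂ - G z₁ - fderiv ℂ G z₁ (z₂ - z₁)‖ ≤ (40 * c / 13) * ‖z₂ - z₁‖ ^ 2 := by
    intro z₁ z₂ hz₁ hz₂
    set A := fderiv ℂ G z₁ with hA
    set h : E → E := fun v => G v - A v with hh
    have hdiff : ∀ v : E, DifferentiableAt ℂ h v := fun v =>
      (hGdiff v).sub A.differentiableAt
    have hfd : ∀ v : E, fderiv ℂ h v = fderiv ℂ G v - A := by
      intro v
      rw [hh]
      rw [fderiv_fun_sub (hGdiff v) A.differentiableAt, A.fderiv]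
    have hsegsub : segment ℝ z₁ z₂ ⊆ Metric.closedBall x (7 / (60 * c)) :=
      (convex_closedBall x _).segment_subset hz₁ hz₂
    have hsegdist : ∀ v ∈ segment ℝ z₁ z₂, ‖v - z₁‖ ≤ ‖z₂ - z₁‖ := by
      rintro v ⟨a, b, ha, hb, hab, rfl⟩
      have hbb : a • z₁ + b • z₂ - z₁ = b • (z₂ - z₁) := by
        have ha' : a = 1 - b := by linarith
        rw [ha', sub_smul, one_smul, smul_sub]
        abel
      rw [hbb, norm_smul, Real.norm_of_nonneg hb]
      have hb1 : b ≤ 1 := by linarith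
      nlinarith [norm_nonneg (z₂ - z₁)]
    have hbound : ∀ v ∈ segment ℝ z₁ z₂, ‖fderiv ℂ h v‖ ≤ (40 * c / 13) * ‖z₂ - z₁‖ := by
      intro v hv
      rw [hfd v]
      have hvball := hsegsub hv
      have hv1 : ‖v - x‖ ≤ 7 / (60 * c) := by rwa [mem_closedBall_iff_norm] at hvball
      have hz1' : ‖z₁ - x‖ ≤ 7 / (60 * c) := by rwa [mem_closedBall_iff_norm] at hz₁
      have hlip := hLip (v - x) (z₁ - x) hv1 hz1'
      have e1 : x + (v - x) = v := by abel
      have e2 : x + (z₁ - x) = z₁ := by abel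
      rw [e1, e2] at hlip
      calc ‖fderiv ℂ G v - A‖ ≤ (40 * c / 13) * ‖(v - x) - (z₁ - x)‖ := by
            rw [hA]
            exact hlip
        _ = (40 * c / 13) * ‖v - z₁‖ := by rw [sub_sub_sub_cancel_right]
        _ ≤ (40 * c / 13) * ‖z₂ - z₁‖ :=
            mul_le_mul_of_nonneg_left (hsegdist v hv) (by positivity)
    have hMVT := Convex.norm_image_sub_le_of_norm_fderiv_le (fun v _ => hdiff v) hbound
      (convex_segment z₁ z₂) (left_mem_segment ℝ z₁ z₂) (right_mem_segment ℝ z₁ z₂)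
    have hid : h z₂ - h z₁ = G z₂ - G z₁ - A (z₂ - z₁) := by
      rw [hh]
      simp only [map_sub]
      abel
    calc ‖G z₂ - G z₁ - A (z₂ - z₁)‖ = ‖h z₂ - h z₁‖ := by rw [hid]
      _ ≤ (40 * c / 13) * ‖z₂ - z₁‖ * ‖z₂ - z₁‖ := hMVT
      _ = (40 * c / 13) * ‖z₂ - z₁‖ ^ 2 := by ring
  -- chord method fixed point
  obtain ⟨xs, hGxs, hxxs⟩ : ∃ xs : E, G xs = 0 ∧ ‖x - xs‖ ≤ 1 / (30 * c) := by
    set ρ₁ : ℝ := 9 / (200 * c) with hρ₁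
    have hρ₁pos : 0 < ρ₁ := by positivity
    set T : E → E := fun v => v - G v with hT
    have hTdiff : ∀ v : E, DifferentiableAt ℂ T v := fun v =>
      differentiableAt_fun_id.sub (hGdiff v)
    have hTd : ∀ v : E, fderiv ℂ T v = ContinuousLinearMap.id ℂ E - fderiv ℂ G v := by
      intro v
      rw [hT]
      rw [fderiv_fun_sub differentiableAt_fun_id (hGdiff v), fderiv_fun_id]
    have hTb : ∀ v ∈ Metric.closedBall x ρ₁, ‖fderiv ℂ T v‖ ≤ 9 / 91 := by
      intro v hv
      rw [hTd v]
      have hv1 : ‖v - x‖ ≤ ρ₁ := by rwa [mem_closedBall_iff_norm] at hv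
      have hct : c * ‖v - x‖ ≤ 9 / 200 := by
        calc c * ‖v - x‖ ≤ c * (9 / (200 * c)) := mul_le_mul_of_nonneg_left hv1 hc.le
          _ = 9 / 200 := by field_simp
      have hd := hDer (9 / 200) (by norm_num) (by norm_num) (v - x) hct
      have e1 : x + (v - x) = v := by abel
      rw [e1] at hd
      calc ‖ContinuousLinearMap.id ℂ E - fderiv ℂ G v‖
          = ‖fderiv ℂ G v - ContinuousLinearMap.id ℂ E‖ := norm_sub_rev _ _
        _ ≤ 2 * (9 / 200) / (1 - 2 * (9 / 200)) := hd
        _ ≤ 9 / 91 := by norm_num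
    have hx_mem : x ∈ Metric.closedBall x ρ₁ := mem_closedBall_self hρ₁pos.le
    have hpair : ∀ v₁ ∈ Metric.closedBall x ρ₁, ∀ v₂ ∈ Metric.closedBall x ρ₁,
        ‖T v₁ - T v₂‖ ≤ (9 / 91) * ‖v₁ - v₂‖ := by
      intro v₁ hv₁ v₂ hv₂
      exact Convex.norm_image_sub_le_of_norm_fderiv_le (fun v _ => hTdiff v) hTb
        (convex_closedBall x ρ₁) hv₂ hv₁
    have hmaps : Set.MapsTo T (Metric.closedBall x ρ₁) (Metric.closedBall x ρ₁) := by
      intro z hz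
      rw [mem_closedBall_iff_norm]
      have h1 : ‖T z - T x‖ ≤ (9 / 91) * ‖z - x‖ := hpair z hz x hx_mem
      have h2 : ‖T x - x‖ = ‖G x‖ := by
        rw [hT]
        show ‖x - G x - x‖ = ‖G x‖
        rw [sub_sub_cancel_left, norm_neg]
      have hzx : ‖z - x‖ ≤ ρ₁ := by rwa [mem_closedBall_iff_norm] at hz
      have e : T z - x = (T z - T x) + (T x - x) := by abel
      calc ‖T z - x‖ ≤ ‖T z - T x‖ + ‖T x - x‖ := by rw [e]; exact norm_add_le _ _
        _ ≤ (9 / 91) * ρ₁ + 3 / (100 * c) := by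
            apply _root_.add_le_add
            · calc ‖T z - T x‖ ≤ (9 / 91) * ‖z - x‖ := h1
                _ ≤ (9 / 91) * ρ₁ := mul_le_mul_of_nonneg_left hzx (by norm_num)
            · rw [h2]; exact hb
        _ ≤ ρ₁ := by
            have h1c : (0:ℝ) < 1 / c := by positivity
            have e3 : (9:ℝ) / 91 * ρ₁ + 3 / (100 * c)
                = (9 / 91 * (9 / 200) + 3 / 100) * (1 / c) := by rw [hρ₁]; ring
            have e4 : ρ₁ = (9 / 200) * (1 / c) := by rw [hρ₁]; ring
            rw [e3, e4]
            apply mul_le_mul_of_nonneg_right _ h1c.le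
            norm_num
    set K : ℝ≥0 := ⟨9 / 91, by norm_num⟩ with hK
    have hKcoe : (K : ℝ) = 9 / 91 := rfl
    have hlipOn : LipschitzOnWith K T (Metric.closedBall x ρ₁) := by
      rw [lipschitzOnWith_iff_dist_le_mul]
      intro v₁ hv₁ v₂ hv₂
      rw [dist_eq_norm, dist_eq_norm, hKcoe]
      exact hpair v₁ hv₁ v₂ hv₂
    haveI : Nonempty (Metric.closedBall x ρ₁) := ⟨⟨x, hx_mem⟩⟩
    haveI : CompleteSpace (Metric.closedBall x ρ₁) :=
      Metric.isClosed_closedBall.completeSpace_coe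
    set Tr : Metric.closedBall x ρ₁ → Metric.closedBall x ρ₁ :=
      hmaps.restrict T _ _ with hTr
    have hlipr : LipschitzWith K Tr := (hmaps.lipschitzOnWith_iff_restrict).1 hlipOn
    have hcon : ContractingWith K Tr := ⟨by rw [← NNReal.coe_lt_one, hKcoe]; norm_num, hlipr⟩
    set xsf := ContractingWith.fixedPoint Tr hcon with hxsf
    have hfix : Tr xsf = xsf := hcon.fixedPoint_isFixedPt
    refine ⟨(xsf : E), ?_, ?_⟩
    · have hfix' : T (xsf : E) = (xsf : E) := by
        have h5 := congrArg (Subtype.val) hfix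
        rwa [Set.MapsTo.val_restrict_apply] at h5
      have : (xsf : E) - G (xsf : E) = (xsf : E) := hfix'
      exact sub_eq_self.1 this
    · have hd := hcon.dist_fixedPoint_le ⟨x, hx_mem⟩
      have hdist1 : dist (⟨x, hx_mem⟩ : Metric.closedBall x ρ₁) xsf = dist x (xsf : E) :=
        Subtype.dist_eq _ _
      have hdist2 : dist (⟨x, hx_mem⟩ : Metric.closedBall x ρ₁) (Tr ⟨x, hx_mem⟩)
          = dist x (T x) := by
        rw [Subtype.dist_eq, Set.MapsTo.val_restrict_apply]
      rw [hdist1, hdist2, hKcoe] at hd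
      have hTx : dist x (T x) = ‖G x‖ := by
        rw [dist_eq_norm, hT]
        show ‖x - (x - G x)‖ = ‖G x‖
        rw [sub_sub_cancel]
      rw [hTx] at hd
      have h1c : (0:ℝ) < 1 / c := by positivity
      calc ‖x - (xsf : E)‖ = dist x (xsf : E) := (dist_eq_norm _ _).symm
        _ ≤ ‖G x‖ / (1 - 9 / 91) := hd
        _ ≤ (3 / (100 * c)) / (1 - 9 / 91) := by
            gcongr
        _ ≤ 1 / (30 * c) := by
            have e5 : (3 / (100 * c) : ℝ) / (1 - 9 / 91) = (3 / 100 * (91 / 82)) * (1 / c) := by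
              ring
            have e6 : (1 : ℝ) / (30 * c) = (1 / 30) * (1 / c) := by ring
            rw [e5, e6]
            apply mul_le_mul_of_nonneg_right _ h1c.le
            norm_num
  refine ⟨xs, hGxs, hxxs, ?_⟩
  intro z hz
  have hxsx : ‖xs - x‖ ≤ 1 / (30 * c) := by rw [norm_sub_rev]; exact hxxs
  have hzx : ‖z - x‖ ≤ 7 / (60 * c) := by
    have e : z - x = (z - xs) + (xs - x) := by abel
    calc ‖z - x‖ = ‖(z - xs) + (xs - x)‖ := by rw [e]
      _ ≤ ‖z - xs‖ + ‖xs - x‖ := norm_add_le _ _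
      _ ≤ 1 / (12 * c) + 1 / (30 * c) := _root_.add_le_add hz hxsx
      _ = 7 / (60 * c) := by field_simp; ring
  have hUz := hUnit (z - x) hzx
  have e1 : x + (z - x) = z := by abel
  rw [e1] at hUz
  obtain ⟨hU, hB⟩ := hUz
  refine ⟨hU, ?_⟩
  set B := Ring.inverse (fderiv ℂ G z) with hBdef
  have hBG : B * (fderiv ℂ G z) = 1 := Ring.inverse_mul_cancel _ hU
  have e2 : B ((fderiv ℂ G z) (z - xs)) = z - xs := by
    have h5 := congrArg (fun M : E →L[ℂ] E => M (z - xs)) hBG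
    simpa [ContinuousLinearMap.mul_apply] using h5
  have e3 : z - B (G z) - xs = B ((fderiv ℂ G z) (z - xs) - G z) := by
    rw [map_sub, e2]
    abel
  have e4 : (fderiv ℂ G z) (z - xs) - G z = G xs - G z - (fderiv ℂ G z) (xs - z) := by
    rw [hGxs, map_sub, map_sub]
    abel
  have hmem1 : z ∈ Metric.closedBall x (7 / (60 * c)) := mem_closedBall_iff_norm.2 hzx
  have hmem2 : xs ∈ Metric.closedBall x (7 / (60 * c)) := by
    rw [mem_closedBall_iff_norm]
    calc ‖xs - x‖ ≤ 1 / (30 * c) := hxsx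
      _ ≤ 7 / (60 * c) := by
          rw [div_le_div_iff₀ (by positivity) (by positivity)]
          nlinarith
  have hTayz := hTay z xs hmem1 hmem2
  calc ‖z - B (G z) - xs‖ = ‖B ((fderiv ℂ G z) (z - xs) - G z)‖ := by rw [e3]
    _ ≤ ‖B‖ * ‖(fderiv ℂ G z) (z - xs) - G z‖ := B.le_opNorm _
    _ = ‖B‖ * ‖G xs - G z - (fderiv ℂ G z) (xs - z)‖ := by rw [e4]
    _ ≤ (23 / 16) * ((40 * c / 13) * ‖xs - z‖ ^ 2) :=
        mul_le_mul hB hTayz (norm_nonneg _) (by norm_num)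
    _ = (115 * c / 26) * ‖z - xs‖ ^ 2 := by rw [norm_sub_rev]; ring

end aux

set_option maxHeartbeats 2000000 in
theorem smale_alpha_same_solution {n : ℕ}
    (F : EuclideanSpace ℂ (Fin n) → EuclideanSpace ℂ (Fin n))
    (hF : ContDiff ℂ ⊤ F)
    (x y : EuclideanSpace ℂ (Fin n))
    (hinv : IsUnit (fderiv ℂ F x))
    (halpha : smaleAlpha F x < 0.03)
    (hdist : ‖x - y‖ < 1 / (20 * smaleGamma F x)) :
    ∃ xstar : EuclideanSpace ℂ (Fin n), F xstar = 0 ∧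
      (∀ k : ℕ, 1 ≤ k →
        ‖(newtonOp F)^[k] x - xstar‖ ≤ (1/2 : ℝ) ^ (2 ^ k - 1) * ‖x - xstar‖) ∧
      (∀ k : ℕ, 1 ≤ k →
        ‖(newtonOp F)^[k] y - xstar‖ ≤ (1/2 : ℝ) ^ (2 ^ k - 1) * ‖y - xstar‖) ∧
      ‖x - xstar‖ ≤ 1 / (20 * smaleGamma F x) := by
  set c := smaleGamma F x with hc_def
  have hdpos : 0 < 1 / (20 * c) := lt_of_le_of_lt (norm_nonneg _) hdist
  have hc : 0 < c := by
    by_contra h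
    push_neg at h
    have h2 : 20 * c ≤ 0 := by linarith
    have := div_nonpos_of_nonneg_of_nonpos (zero_le_one) h2
    linarith
  have hL : IsUnit (fderiv ℂ F x) := hinv
  set invL := Ring.inverse (fderiv ℂ F x) with hinvL_def
  set G : EuclideanSpace ℂ (Fin n) → EuclideanSpace ℂ (Fin n) := fun v => invL (F v) with hG_def
  have hG : ContDiff ℂ ω G := invL.contDiff.comp hF
  have hFdiff : Differentiable ℂ F := hF.differentiable (by simp)
  have hfderivG : ∀ z, fderiv ℂ G z = invL * fderiv ℂ F z := by
    intro z
    exact (invL.hasFDerivAt.comp z (hFdiff z).hasFDerivAt).fderiv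
  have hinvL_mul : invL * fderiv ℂ F x = 1 := Ring.inverse_mul_cancel _ hinv
  have hL_mul : fderiv ℂ F x * invL = 1 := Ring.mul_inverse_cancel _ hinv
  have hg1 : fderiv ℂ G x = ContinuousLinearMap.id ℂ (EuclideanSpace ℂ (Fin n)) := by
    rw [hfderivG x, hinvL_mul]
    rfl
  have hbeta : smaleBeta F x * c < 3 / 100 := by
    have h3 : (0.03 : ℝ) = 3 / 100 := by norm_num
    rw [← h3]
    exact halpha
  have hb : ‖G x‖ ≤ 3 / (100 * c) := by
    have hGx : ‖G x‖ = smaleBeta F x := rfl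
    rw [hGx, le_div_iff₀ (by positivity)]
    nlinarith [smaleBeta F x, hbeta]
  have hiter : ∀ k : ℕ, iteratedFDeriv ℂ k G x
      = invL.compContinuousMultilinearMap (iteratedFDeriv ℂ k F x) := by
    intro k
    exact invL.iteratedFDeriv_comp_left hF.contDiffAt le_top
  have hcoef : ∀ k : ℕ, 2 ≤ k → ‖iteratedFDeriv ℂ k G x‖ ≤ k ! * c ^ (k - 1) := by
    intro k hk
    set a : ℝ := ‖(Ring.inverse (fderiv ℂ F x)).compContinuousMultilinearMap
      (iteratedFDeriv ℂ k F x)‖ / (Nat.factorial k) with ha_def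
    have ha : 0 ≤ a := by positivity
    have hk1 : (0:ℝ) < (k:ℝ) - 1 := by
      have h2 : (2:ℝ) ≤ (k:ℝ) := by exact_mod_cast hk
      linarith
    have hterm : a ^ ((1:ℝ) / ((k:ℝ) - 1)) ≤ c := by
      by_cases hbdd : BddAbove (Set.range (fun j : {j : ℕ // 2 ≤ j} =>
        (‖(Ring.inverse (fderiv ℂ F x)).compContinuousMultilinearMap
            (iteratedFDeriv ℂ (j : ℕ) F x)‖ / (Nat.factorial (j : ℕ))) ^
              ((1 : ℝ) / ((j : ℕ) - 1))))
      · exact le_ciSup hbdd (⟨k, hk⟩ : {j : ℕ // 2 ≤ j})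
      · exfalso
        have hzero : c = 0 := Real.iSup_of_not_bddAbove hbdd
        linarith
    have key : a ≤ c ^ ((k:ℝ) - 1) := by
      have h1 := Real.rpow_le_rpow (Real.rpow_nonneg ha _) hterm (le_of_lt hk1)
      rwa [← Real.rpow_mul ha, one_div_mul_cancel hk1.ne', Real.rpow_one] at h1
    have hcast : c ^ ((k:ℝ) - 1) = c ^ (k - 1 : ℕ) := by
      rw [← Real.rpow_natCast c (k - 1)]
      congr 1
      rw [Nat.cast_sub (by omega)]
      norm_num
    rw [hcast] at key
    rw [hiter k]
    rw [ha_def, div_le_iff₀ (by positivity)] at key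
    calc ‖(Ring.inverse (fderiv ℂ F x)).compContinuousMultilinearMap (iteratedFDeriv ℂ k F x)‖
        ≤ c ^ (k - 1) * (Nat.factorial k) := key
      _ = k ! * c ^ (k - 1) := by ring
  obtain ⟨xs, hGxs, hxxs, hstep⟩ := smale_core G hG x c hc hg1 hb hcoef
  have hFxs : F xs = 0 := by
    have h0 : invL (F xs) = 0 := hGxs
    calc F xs = (fderiv ℂ F x * invL) (F xs) := by rw [hL_mul]; rfl
      _ = (fderiv ℂ F x) (invL (F xs)) := rfl
      _ = (fderiv ℂ F x) 0 := by rw [h0]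
      _ = 0 := map_zero _
  have huniq : ∀ (a b : EuclideanSpace ℂ (Fin n) →L[ℂ] EuclideanSpace ℂ (Fin n)),
      IsUnit a → a * b = 1 → Ring.inverse a = b := by
    intro a b ha hab
    calc Ring.inverse a = Ring.inverse a * (a * b) := by rw [hab, mul_one]
      _ = (Ring.inverse a * a) * b := by rw [mul_assoc]
      _ = b := by rw [Ring.inverse_mul_cancel _ ha, one_mul]
  have hnewton : ∀ z : EuclideanSpace ℂ (Fin n), ‖z - xs‖ ≤ 1 / (12 * c) →
      newtonOp F z = z - Ring.inverse (fderiv ℂ G z) (G z) := by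
    intro z hzb
    obtain ⟨hU, _⟩ := hstep z hzb
    have hfz : fderiv ℂ F z = fderiv ℂ F x * fderiv ℂ G z := by
      rw [hfderivG z, ← mul_assoc, hL_mul, one_mul]
    have hUF : IsUnit (fderiv ℂ F z) := by
      rw [hfz]
      exact hinv.mul hU
    have hprod : Ring.inverse (fderiv ℂ F z) = Ring.inverse (fderiv ℂ G z) * invL := by
      apply huniq _ _ hUF
      rw [hfz, mul_assoc, ← mul_assoc (fderiv ℂ G z), Ring.mul_inverse_cancel _ hU, one_mul,
        hL_mul]
    have hinv_app : Ring.inverse (fderiv ℂ F z) (F z)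
        = Ring.inverse (fderiv ℂ G z) (G z) := by
      rw [hprod]
      rfl
    rw [newtonOp, if_pos hUF, hinv_app]
  have hx12 : ‖x - xs‖ ≤ 1 / (12 * c) := by
    calc ‖x - xs‖ ≤ 1 / (30 * c) := hxxs
      _ ≤ 1 / (12 * c) := by
        rw [div_le_div_iff₀ (by positivity) (by positivity)]
        nlinarith
  have hy12 : ‖y - xs‖ ≤ 1 / (12 * c) := by
    have e : y - xs = -(x - y) + (x - xs) := by abel
    calc ‖y - xs‖ = ‖-(x - y) + (x - xs)‖ := by rw [e]
      _ ≤ ‖-(x - y)‖ + ‖x - xs‖ := norm_add_le _ _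
      _ = ‖x - y‖ + ‖x - xs‖ := by rw [norm_neg]
      _ ≤ 1 / (20 * c) + 1 / (30 * c) := _root_.add_le_add hdist.le hxxs
      _ = 1 / (12 * c) := by field_simp; ring
  have hiterate : ∀ z : EuclideanSpace ℂ (Fin n), ‖z - xs‖ ≤ 1 / (12 * c) → ∀ k : ℕ,
      ‖(newtonOp F)^[k] z - xs‖ ≤ (1/2 : ℝ) ^ (2 ^ k - 1) * ‖z - xs‖ ∧
      ‖(newtonOp F)^[k] z - xs‖ ≤ 1 / (12 * c) := by
    intro z hz k
    have hKz : (115 * c / 26) * ‖z - xs‖ ≤ 1 / 2 := by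
      calc (115 * c / 26) * ‖z - xs‖ ≤ (115 * c / 26) * (1 / (12 * c)) :=
            mul_le_mul_of_nonneg_left hz (by positivity)
        _ = 115 / 312 := by field_simp; ring
        _ ≤ 1 / 2 := by norm_num
    induction k with
    | zero => simpa using hz
    | succ k ih =>
      obtain ⟨ih1, ih2⟩ := ih
      set v := (newtonOp F)^[k] z with hv
      obtain ⟨hU, hquad⟩ := hstep v ih2
      have hNv : (newtonOp F)^[k+1] z = v - Ring.inverse (fderiv ℂ G v) (G v) := by
        rw [Function.iterate_succ_apply', ← hv]
        exact hnewton v ih2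
      have hquad' : ‖(newtonOp F)^[k+1] z - xs‖ ≤ (115 * c / 26) * ‖v - xs‖ ^ 2 := by
        rw [hNv]
        exact hquad
      have hpow : ((1:ℝ)/2) ^ (2 ^ (k+1) - 1)
          = (1/2) ^ (2 ^ k - 1) * (1/2) ^ (2 ^ k - 1) * (1/2) := by
        rw [← pow_add, ← pow_succ]
        congr 1
        have hm : 1 ≤ 2 ^ k := Nat.one_le_two_pow
        have h2 : 2 ^ (k+1) = 2 * 2 ^ k := by rw [pow_succ]; ring
        omega
      have hrate : ‖(newtonOp F)^[k+1] z - xs‖ ≤ (1/2 : ℝ) ^ (2 ^ (k+1) - 1) * ‖z - xs‖ := by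
        calc ‖(newtonOp F)^[k+1] z - xs‖ ≤ (115 * c / 26) * ‖v - xs‖ ^ 2 := hquad'
          _ ≤ (115 * c / 26) * (((1/2) ^ (2 ^ k - 1) * ‖z - xs‖)
              * ((1/2) ^ (2 ^ k - 1) * ‖z - xs‖)) := by
              rw [pow_two]
              apply mul_le_mul_of_nonneg_left _ (by positivity)
              exact mul_le_mul ih1 ih1 (norm_nonneg _) (by positivity)
          _ = (1/2) ^ (2 ^ k - 1) * (1/2) ^ (2 ^ k - 1)
              * (((115 * c / 26) * ‖z - xs‖) * ‖z - xs‖) := by ring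
          _ ≤ (1/2) ^ (2 ^ k - 1) * (1/2) ^ (2 ^ k - 1) * ((1/2) * ‖z - xs‖) := by
              apply mul_le_mul_of_nonneg_left _ (by positivity)
              exact mul_le_mul_of_nonneg_right hKz (norm_nonneg _)
          _ = (1/2 : ℝ) ^ (2 ^ (k+1) - 1) * ‖z - xs‖ := by rw [hpow]; ring
      refine ⟨hrate, ?_⟩
      calc ‖(newtonOp F)^[k+1] z - xs‖ ≤ (1/2 : ℝ) ^ (2 ^ (k+1) - 1) * ‖z - xs‖ := hrate
        _ ≤ 1 * (1 / (12 * c)) := by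
            apply mul_le_mul _ hz (norm_nonneg _) zero_le_one
            exact pow_le_one₀ (by norm_num) (by norm_num)
        _ = 1 / (12 * c) := one_mul _
  refine ⟨xs, hFxs, fun k _ => (hiterate x hx12 k).1, fun k _ => (hiterate y hy12 k).1, ?_⟩
  calc ‖x - xs‖ ≤ 1 / (30 * c) := hxxs
    _ ≤ 1 / (20 * c) := by
        rw [div_le_div_iff₀ (by positivity) (by positivity)]
        nlinarith
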